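/- Let f(z,w) = (p(z), q(z,w)) with p(z) = z^δ and q(z,w) = z^γ w^d(1 + η(z,w)), where |η| < ε on U_r = {0 < |z| < r, |w| < r|z|^l}, and assume γ + l d ≥ l δ and d ≥ 2. Then for all sufficiently small r > 0, f(U_r) ⊆ U_r. -/
import Mathlib


/-- invariance of U_r, Case 2: for f(z,w) = (z^δ, z^γ w^d (1 + η(z,w)))
with |η| < ε on U_{r₁} = {0 < |z| < r₁, |w| < r₁|z|^l}, γ + l·d ≥ l·δ and d ≥ 2,
one has f(U_r) ⊆ U_r for all sufficiently small r > 0. -/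
theorem stmt4
    (δ d γ : ℕ) (hδ : 2 ≤ δ) (hd : 2 ≤ d)
    (l : ℝ) (hl : 0 ≤ l) (hld : l * δ ≤ (γ : ℝ) + l * d)
    (ε : ℝ) (hε : 0 < ε) (hε1 : ε < 1)
    (η : ℂ → ℂ → ℂ) (r1 : ℝ) (hr1 : 0 < r1)
    (hη : ∀ z w : ℂ, 0 < ‖z‖ → ‖z‖ < r1 → ‖w‖ < r1 * ‖z‖ ^ l → ‖η z w‖ < ε) :
    ∃ r0, 0 < r0 ∧ r0 ≤ r1 ∧ ∀ r, 0 < r → r ≤ r0 → ∀ z w : ℂ,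
      0 < ‖z‖ → ‖z‖ < r → ‖w‖ < r * ‖z‖ ^ l →
      (0 < ‖z ^ δ‖ ∧ ‖z ^ δ‖ < r ∧
        ‖z ^ γ * w ^ d * (1 + η z w)‖ < r * ‖z ^ δ‖ ^ l) := by
  refine ⟨min r1 (1/2), lt_min hr1 (by norm_num), min_le_left _ _, ?_⟩
  intro r hr hrle z w hz hzr hwr
  have hrr1 : r ≤ r1 := le_trans hrle (min_le_left _ _)
  have hrh : r ≤ 1/2 := le_trans hrle (min_le_right _ _)
  have hr1le : r ≤ 1 := by linarith
  have ha0 : (0:ℝ) < ‖z‖ := hz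
  have ha1 : ‖z‖ < 1 := lt_of_lt_of_le hzr hr1le
  have hzl : (0:ℝ) ≤ ‖z‖ ^ l := Real.rpow_nonneg ha0.le l
  have hηb : ‖η z w‖ < ε := hη z w hz (lt_of_lt_of_le hzr hrr1)
      (lt_of_lt_of_le hwr (by nlinarith))
  have hone : ‖(1 : ℂ) + η z w‖ ≤ 1 + ε := by
    calc ‖(1:ℂ) + η z w‖ ≤ ‖(1:ℂ)‖ + ‖η z w‖ := norm_add_le _ _
    _ ≤ 1 + ε := by rw [norm_one]; linarith
  have hδpow : ‖z ^ δ‖ = ‖z‖ ^ δ := norm_pow _ _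
  refine ⟨?_, ?_, ?_⟩
  · rw [hδpow]; positivity
  · rw [hδpow]
    have h2 : ‖z‖ ^ δ ≤ ‖z‖ ^ 2 := pow_le_pow_of_le_one ha0.le ha1.le hδ
    nlinarith [sq_nonneg ‖z‖]
  · rw [hδpow]
    have hnorm : ‖z ^ γ * w ^ d * (1 + η z w)‖ = ‖z‖ ^ γ * ‖w‖ ^ d * ‖(1:ℂ) + η z w‖ := by
      simp [norm_mul, norm_pow]
    rw [hnorm]
    have hb : ‖w‖ ^ d ≤ (r * ‖z‖ ^ l) ^ d := pow_le_pow_left₀ (norm_nonneg _) hwr.le d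
    have key : ‖z‖ ^ γ * (r * ‖z‖ ^ l) ^ d * (1 + ε) < r * (‖z‖ ^ δ) ^ l := by
      have e1 : (‖z‖ ^ δ : ℝ) ^ l = ‖z‖ ^ ((δ : ℝ) * l) := by
        rw [← Real.rpow_natCast ‖z‖ δ, ← Real.rpow_mul ha0.le]
      have e2 : ‖z‖ ^ γ * (r * ‖z‖ ^ l) ^ d = r ^ d * ‖z‖ ^ ((γ : ℝ) + l * d) := by
        rw [mul_pow, ← Real.rpow_natCast (‖z‖ ^ l) d, ← Real.rpow_mul ha0.le,
          Real.rpow_add ha0, Real.rpow_natCast]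
        ring
      rw [e1, e2]
      have h3 : ‖z‖ ^ ((γ:ℝ) + l * d) ≤ ‖z‖ ^ ((δ:ℝ) * l) := by
        apply Real.rpow_le_rpow_of_exponent_ge ha0 ha1.le
        nlinarith
      have h4 : r ^ d * (1 + ε) < r := by
        have h5 : r ^ d ≤ r ^ 2 := pow_le_pow_of_le_one hr.le hr1le hd
        have h6 : 0 < r ^ d := pow_pos hr d
        nlinarith
      have hz4 : 0 < ‖z‖ ^ ((δ:ℝ)*l) := Real.rpow_pos_of_pos ha0 _
      have h7 : 0 ≤ ‖z‖ ^ ((γ:ℝ) + l * d) := Real.rpow_nonneg ha0.le _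
      have h8 : 0 < r ^ d := pow_pos hr d
      calc r ^ d * ‖z‖ ^ ((γ:ℝ) + l * d) * (1 + ε)
          ≤ r ^ d * ‖z‖ ^ ((δ:ℝ) * l) * (1 + ε) :=
            mul_le_mul_of_nonneg_right (mul_le_mul_of_nonneg_left h3 h8.le) (by linarith)
        _ = (r ^ d * (1 + ε)) * ‖z‖ ^ ((δ:ℝ) * l) := by ring
        _ < r * ‖z‖ ^ ((δ:ℝ) * l) := mul_lt_mul_of_pos_right h4 hz4
    refine lt_of_le_of_lt ?_ key
    have h9 : ‖z‖ ^ γ * ‖w‖ ^ d ≤ ‖z‖ ^ γ * (r * ‖z‖ ^ l) ^ d :=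
      mul_le_mul_of_nonneg_left hb (by positivity)
    exact mul_le_mul h9 hone (norm_nonneg _) (by positivity)
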